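/- For any function f : S → ℝ, any policy π, and any transition kernel P, the discounted return satisfies J^π_P = E_{s∼ρ₀}[f(s)] + (1/(1−γ)) · E_{s∼d^π_P, a∼π(·|s), s'∼P(·|s,a)}[r(s,a,s') + γ f(s') − f(s)]. -/

import Mathlib

open scoped BigOperators

section MDP

variable {S A : Type*} [Fintype S] [Fintype A] [DecidableEq S]

/-- One-step state distribution update under kernel `P` and policy `π`. -/
noncomputable def stepDist (P : S → A → S → ℝ) (π : S → A → ℝ) (ρ : S → ℝ) : S → ℝ :=
  fun s => ∑ s' : S, ∑ a : A, ρ s' * π s' a * P s' a s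

/-- Distribution of the state at time `t`. -/
noncomputable def stateDist (P : S → A → S → ℝ) (π : S → A → ℝ) (ρ₀ : S → ℝ) : ℕ → S → ℝ
  | 0 => ρ₀
  | t + 1 => stepDist P π (stateDist P π ρ₀ t)

/-- Discounted state visitation distribution `d^π_P`. -/
noncomputable def visitS (γ : ℝ) (P : S → A → S → ℝ) (π : S → A → ℝ) (ρ₀ : S → ℝ) : S → ℝ :=
  fun s => (1 - γ) * ∑' t : ℕ, γ ^ t * stateDist P π ρ₀ t s

/-- Discounted state-action visitation distribution `μ^π_P`. -/
noncomputable def visitSA (γ : ℝ) (P : S → A → S → ℝ) (π : S → A → ℝ) (ρ₀ : S → ℝ) :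
    S × A → ℝ :=
  fun x => (1 - γ) * ∑' t : ℕ, γ ^ t * stateDist P π ρ₀ t x.1 * π x.1 x.2

/-- Discounted transition (state-action-next-state) visitation distribution `ν^π_P`. -/
noncomputable def visitT (γ : ℝ) (P : S → A → S → ℝ) (π : S → A → ℝ) (ρ₀ : S → ℝ) :
    S × A × S → ℝ :=
  fun x => (1 - γ) * ∑' t : ℕ, γ ^ t * stateDist P π ρ₀ t x.1 * π x.1 x.2.1 * P x.1 x.2.1 x.2.2

/-- Expected discounted return starting from initial distribution `ρ₀`. -/
noncomputable def ret (γ : ℝ) (r : S → A → S → ℝ) (P : S → A → S → ℝ) (π : S → A → ℝ)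
    (ρ₀ : S → ℝ) : ℝ :=
  ∑' t : ℕ, γ ^ t *
    ∑ s : S, ∑ a : A, ∑ s' : S, stateDist P π ρ₀ t s * π s a * P s a s' * r s a s'

/-- Value function `V^π_P`. -/
noncomputable def valueFn (γ : ℝ) (r : S → A → S → ℝ) (P : S → A → S → ℝ) (π : S → A → ℝ) :
    S → ℝ :=
  fun s => ret γ r P π (fun s'' => if s'' = s then 1 else 0)

/-- Expected discounted return `J^π_P = E_{ρ₀}[V^π_P]`. -/
noncomputable def expRet (γ : ℝ) (r : S → A → S → ℝ) (P : S → A → S → ℝ) (π : S → A → ℝ)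
    (ρ₀ : S → ℝ) : ℝ :=
  ∑ s : S, ρ₀ s * valueFn γ r P π s

/-- Total variation distance `(1/2) ∑ |p - q|`. -/
noncomputable def tvDist {X : Type*} [Fintype X] (p q : X → ℝ) : ℝ :=
  (1 / 2) * ∑ x : X, |p x - q x|

/-- Kullback–Leibler divergence on a finite set. -/
noncomputable def klDiv' {X : Type*} [Fintype X] (p q : X → ℝ) : ℝ :=
  ∑ x : X, p x * Real.log (p x / q x)

/-- Jensen–Shannon divergence on a finite set. -/
noncomputable def jsDiv {X : Type*} [Fintype X] (p q : X → ℝ) : ℝ :=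
  (1 / 2) * klDiv' p (fun x => (p x + q x) / 2) +
    (1 / 2) * klDiv' q (fun x => (p x + q x) / 2)

/-- `π` is a stochastic policy. -/
def IsStochPol (π : S → A → ℝ) : Prop :=
  ∀ s, (∀ a, 0 ≤ π s a) ∧ ∑ a : A, π s a = 1

/-- `P` is a stochastic transition kernel. -/
def IsStochKer (P : S → A → S → ℝ) : Prop :=
  ∀ s a, (∀ s', 0 ≤ P s a s') ∧ ∑ s' : S, P s a s' = 1

/-- `p` is a probability mass function. -/
def IsProb {X : Type*} [Fintype X] (p : X → ℝ) : Prop :=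
  (∀ x, 0 ≤ p x) ∧ ∑ x : X, p x = 1

end MDP

section AuxProof

variable {S A : Type*} [Fintype S] [Fintype A] [DecidableEq S]

lemma myProb_le_one {X : Type*} [Fintype X] {p : X → ℝ} (hp : IsProb p) (x : X) : p x ≤ 1 :=
  hp.2 ▸ Finset.single_le_sum (fun y _ => hp.1 y) (Finset.mem_univ x)

lemma myBound {p : S → ℝ} (hp : IsProb p) (g : S → ℝ) :
    |∑ s : S, p s * g s| ≤ ∑ s : S, |g s| := by
  calc |∑ s : S, p s * g s| ≤ ∑ s : S, |p s * g s| := Finset.abs_sum_le_sum_abs _ _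
    _ ≤ ∑ s : S, |g s| := by
        refine Finset.sum_le_sum fun s _ => ?_
        rw [abs_mul, abs_of_nonneg (hp.1 s)]
        have h1 : p s ≤ 1 := myProb_le_one hp s
        nlinarith [abs_nonneg (g s)]

lemma mySummable {γ : ℝ} (hγ0 : 0 ≤ γ) (hγ1 : γ < 1) (u : ℕ → ℝ) (C : ℝ)
    (hu : ∀ t, |u t| ≤ C) : Summable (fun t => γ ^ t * u t) := by
  refine Summable.of_abs (Summable.of_nonneg_of_le (fun t => abs_nonneg _) (fun t => ?_)
    ((summable_geometric_of_lt_one hγ0 hγ1).mul_right C))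
  rw [abs_mul, abs_pow, abs_of_nonneg hγ0]
  exact mul_le_mul_of_nonneg_left (hu t) (pow_nonneg hγ0 t)

lemma myStateDist_prob {P : S → A → S → ℝ} {π : S → A → ℝ} {ρ₀ : S → ℝ}
    (hπ : IsStochPol π) (hP : IsStochKer P) (hρ : IsProb ρ₀) (t : ℕ) :
    IsProb (stateDist P π ρ₀ t) := by
  induction t with
  | zero => exact hρ
  | succ t ih =>
    refine ⟨fun s => ?_, ?_⟩
    · exact Finset.sum_nonneg fun s' _ => Finset.sum_nonneg fun a _ =>
        mul_nonneg (mul_nonneg (ih.1 s') ((hπ s').1 a)) ((hP s' a).1 s)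
    · show ∑ s : S, ∑ s' : S, ∑ a : A, stateDist P π ρ₀ t s' * π s' a * P s' a s = 1
      rw [Finset.sum_comm]
      have key : ∀ s' : S, ∑ s : S, ∑ a : A, stateDist P π ρ₀ t s' * π s' a * P s' a s
          = stateDist P π ρ₀ t s' := by
        intro s'
        rw [Finset.sum_comm]
        have h1 : ∀ a : A, ∑ s : S, stateDist P π ρ₀ t s' * π s' a * P s' a s
            = stateDist P π ρ₀ t s' * π s' a := by
          intro a; rw [← Finset.mul_sum, (hP s' a).2, mul_one]
        rw [Finset.sum_congr rfl fun a _ => h1 a, ← Finset.mul_sum, (hπ s').2, mul_one]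
      rw [Finset.sum_congr rfl fun s' _ => key s']
      exact ih.2

lemma myStateDist_linear (P : S → A → S → ℝ) (π : S → A → ℝ) (ρ₀ : S → ℝ) (t : ℕ) (s : S) :
    stateDist P π ρ₀ t s
      = ∑ s₀ : S, ρ₀ s₀ * stateDist P π (fun s'' => if s'' = s₀ then 1 else 0) t s := by
  induction t generalizing s with
  | zero => simp [stateDist, mul_ite]
  | succ t ih =>
    show ∑ s' : S, ∑ a : A, stateDist P π ρ₀ t s' * π s' a * P s' a s = _
    calc ∑ s' : S, ∑ a : A, stateDist P π ρ₀ t s' * π s' a * P s' a s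
        = ∑ s' : S, ∑ a : A, ∑ s₀ : S,
            ρ₀ s₀ * (stateDist P π (fun s'' => if s'' = s₀ then 1 else 0) t s' * π s' a * P s' a s) := by
          refine Finset.sum_congr rfl fun s' _ => Finset.sum_congr rfl fun a _ => ?_
          rw [ih s', Finset.sum_mul, Finset.sum_mul]
          exact Finset.sum_congr rfl fun s₀ _ => by ring
      _ = ∑ s₀ : S, ∑ s' : S, ∑ a : A,
            ρ₀ s₀ * (stateDist P π (fun s'' => if s'' = s₀ then 1 else 0) t s' * π s' a * P s' a s) := by
          exact (Finset.sum_congr rfl fun s' _ => Finset.sum_comm).trans Finset.sum_comm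
      _ = ∑ s₀ : S, ρ₀ s₀ *
            stateDist P π (fun s'' => if s'' = s₀ then 1 else 0) (t + 1) s := by
          refine Finset.sum_congr rfl fun s₀ _ => ?_
          show _ = ρ₀ s₀ * ∑ s' : S, ∑ a : A, _
          rw [Finset.mul_sum]
          exact Finset.sum_congr rfl fun s' _ => (Finset.mul_sum _ _ _).symm

end AuxProof
set_option maxHeartbeats 1000000 in
theorem stmt0 {S A : Type*} [Fintype S] [Fintype A] [DecidableEq S]
    (γ : ℝ) (hγ0 : 0 ≤ γ) (hγ1 : γ < 1)
    (r P : S → A → S → ℝ) (π : S → A → ℝ) (ρ₀ : S → ℝ)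
    (hπ : IsStochPol π) (hP : IsStochKer P) (hρ : IsProb ρ₀)
    (f : S → ℝ) :
    expRet γ r P π ρ₀ =
      (∑ s : S, ρ₀ s * f s) +
        (1 / (1 - γ)) * ∑ s : S, ∑ a : A, ∑ s' : S,
          visitS γ P π ρ₀ s * π s a * P s a s' * (r s a s' + γ * f s' - f s) := by
  have hne : (1 : ℝ) - γ ≠ 0 := by nlinarith
  -- abbreviations
  set D : ℕ → S → ℝ := stateDist P π ρ₀ with hD
  have hprob : ∀ t, IsProb (D t) := fun t => myStateDist_prob hπ hP hρ t
  set g : S → ℝ := fun s => ∑ a : A, ∑ s' : S, π s a * P s a s' * r s a s' with hg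
  set e : ℕ → ℝ := fun t => ∑ s : S, D t s * f s with he
  set R : ℕ → ℝ :=
    fun t => ∑ s : S, ∑ a : A, ∑ s' : S, D t s * π s a * P s a s' * r s a s' with hRdef
  -- collapsing triple sums
  have collapse : ∀ (ρ : S → ℝ) (t : ℕ),
      (∑ s : S, ∑ a : A, ∑ s' : S,
        stateDist P π ρ t s * π s a * P s a s' * r s a s')
      = ∑ s : S, stateDist P π ρ t s * g s := by
    intro ρ t
    refine Finset.sum_congr rfl fun s _ => ?_
    rw [hg]
    simp only [Finset.mul_sum]
    exact Finset.sum_congr rfl fun a _ => Finset.sum_congr rfl fun s' _ => by ring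
  have hRg : ∀ t, R t = ∑ s : S, D t s * g s := fun t => collapse ρ₀ t
  -- bounds and summability
  have hgr : ∀ t, |R t| ≤ ∑ s : S, |g s| := fun t => (hRg t) ▸ myBound (hprob t) g
  have heb : ∀ t, |e t| ≤ ∑ s : S, |f s| := fun t => myBound (hprob t) f
  have hsumR : Summable (fun t => γ ^ t * R t) := mySummable hγ0 hγ1 _ _ hgr
  have hsumE : Summable (fun t => γ ^ t * e t) := mySummable hγ0 hγ1 _ _ heb
  -- Step 1 : expRet = ∑' t, γ^t * R t
  have hδprob : ∀ s₀ : S, IsProb (fun s'' => if s'' = s₀ then 1 else 0) := by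
    intro s₀
    constructor
    · intro x; by_cases h : x = s₀ <;> simp [h]
    · simp
  have hδbound : ∀ (s₀ : S) (t : ℕ),
      |∑ s : S, ∑ a : A, ∑ s' : S,
        stateDist P π (fun s'' => if s'' = s₀ then 1 else 0) t s * π s a * P s a s' * r s a s'|
      ≤ ∑ s : S, |g s| := by
    intro s₀ t
    rw [collapse]
    exact myBound (myStateDist_prob hπ hP (hδprob s₀) t) g
  have h1 : expRet γ r P π ρ₀ = ∑' t : ℕ, γ ^ t * R t := by
    unfold expRet valueFn ret
    have step1 : ∀ s₀ : S, ρ₀ s₀ * (∑' t : ℕ, γ ^ t *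
        ∑ s : S, ∑ a : A, ∑ s' : S,
          stateDist P π (fun s'' => if s'' = s₀ then 1 else 0) t s * π s a * P s a s' * r s a s')
        = ∑' t : ℕ, ρ₀ s₀ * (γ ^ t *
          ∑ s : S, ∑ a : A, ∑ s' : S,
            stateDist P π (fun s'' => if s'' = s₀ then 1 else 0) t s * π s a * P s a s' * r s a s') :=
      fun s₀ => (tsum_mul_left).symm
    rw [Finset.sum_congr rfl fun s₀ _ => step1 s₀]
    rw [← Summable.tsum_finsetSum (fun s₀ _ =>
      ((mySummable hγ0 hγ1 _ _ (hδbound s₀)).mul_left (ρ₀ s₀)))]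
    refine tsum_congr fun t => ?_
    have : ∀ s₀ : S, ρ₀ s₀ * (γ ^ t *
        ∑ s : S, ∑ a : A, ∑ s' : S,
          stateDist P π (fun s'' => if s'' = s₀ then 1 else 0) t s * π s a * P s a s' * r s a s')
        = γ ^ t * (ρ₀ s₀ *
          ∑ s : S, stateDist P π (fun s'' => if s'' = s₀ then 1 else 0) t s * g s) := by
      intro s₀; rw [collapse]; ring
    rw [Finset.sum_congr rfl fun s₀ _ => this s₀, ← Finset.mul_sum]
    congr 1
    rw [hRg t]
    calc ∑ s₀ : S, ρ₀ s₀ * ∑ s : S, stateDist P π (fun s'' => if s'' = s₀ then 1 else 0) t s * g s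
        = ∑ s₀ : S, ∑ s : S, ρ₀ s₀ * stateDist P π (fun s'' => if s'' = s₀ then 1 else 0) t s * g s := by
          refine Finset.sum_congr rfl fun s₀ _ => ?_
          rw [Finset.mul_sum]
          exact Finset.sum_congr rfl fun s _ => by ring
      _ = ∑ s : S, ∑ s₀ : S, ρ₀ s₀ * stateDist P π (fun s'' => if s'' = s₀ then 1 else 0) t s * g s :=
          Finset.sum_comm
      _ = ∑ s : S, D t s * g s := by
          refine Finset.sum_congr rfl fun s _ => ?_
          rw [hD, myStateDist_linear P π ρ₀ t s, Finset.sum_mul]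
  -- step identities
  have hstep : ∀ t, ∑ s : S, ∑ a : A, ∑ s' : S, D t s * π s a * P s a s' * (γ * f s')
      = γ * e (t + 1) := by
    intro t
    have h1 : γ * e (t + 1)
        = ∑ s' : S, ∑ s : S, ∑ a : A, D t s * π s a * P s a s' * (γ * f s') := by
      show γ * ∑ s' : S, (∑ s : S, ∑ a : A, D t s * π s a * P s a s') * f s' = _
      rw [Finset.mul_sum]
      refine Finset.sum_congr rfl fun s' _ => ?_
      rw [Finset.sum_mul, Finset.mul_sum]
      refine Finset.sum_congr rfl fun s _ => ?_
      rw [Finset.sum_mul, Finset.mul_sum]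
      exact Finset.sum_congr rfl fun a _ => by ring
    calc ∑ s : S, ∑ a : A, ∑ s' : S, D t s * π s a * P s a s' * (γ * f s')
        = ∑ s : S, ∑ s' : S, ∑ a : A, D t s * π s a * P s a s' * (γ * f s') :=
          Finset.sum_congr rfl fun s _ => Finset.sum_comm
      _ = ∑ s' : S, ∑ s : S, ∑ a : A, D t s * π s a * P s a s' * (γ * f s') :=
          Finset.sum_comm
      _ = γ * e (t + 1) := h1.symm
  have hself : ∀ t, ∑ s : S, ∑ a : A, ∑ s' : S, D t s * π s a * P s a s' * f s = e t := by
    intro t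
    refine Finset.sum_congr rfl fun s _ => ?_
    have h2 : ∀ a : A, ∑ s' : S, D t s * π s a * P s a s' * f s
        = D t s * f s * π s a := by
      intro a
      have : ∀ s' : S, D t s * π s a * P s a s' * f s
          = (D t s * f s * π s a) * P s a s' := fun s' => by ring
      rw [Finset.sum_congr rfl fun s' _ => this s', ← Finset.mul_sum, (hP s a).2, mul_one]
    rw [Finset.sum_congr rfl fun a _ => h2 a, ← Finset.mul_sum, (hπ s).2, mul_one]
  -- Step 3 : rewrite the visitation sum
  have h3 : (∑ s : S, ∑ a : A, ∑ s' : S,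
        visitS γ P π ρ₀ s * π s a * P s a s' * (r s a s' + γ * f s' - f s))
      = (1 - γ) * ∑' t : ℕ, γ ^ t *
          (∑ s : S, ∑ a : A, ∑ s' : S,
            D t s * π s a * P s a s' * (r s a s' + γ * f s' - f s)) := by
    have hsummand : ∀ (s : S) (a : A) (s' : S),
        visitS γ P π ρ₀ s * π s a * P s a s' * (r s a s' + γ * f s' - f s)
        = ∑' t : ℕ, ((1 - γ) * π s a * P s a s' * (r s a s' + γ * f s' - f s)) *
            (γ ^ t * D t s) := by
      intro s a s'
      rw [tsum_mul_left]
      unfold visitS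
      rw [hD]
      ring
    have hsum1 : ∀ (s : S) (a : A) (s' : S), Summable (fun t : ℕ =>
        ((1 - γ) * π s a * P s a s' * (r s a s' + γ * f s' - f s)) * (γ ^ t * D t s)) := by
      intro s a s'
      refine Summable.mul_left _ (mySummable hγ0 hγ1 _ 1 fun t => ?_)
      rw [abs_of_nonneg ((hprob t).1 s)]
      exact myProb_le_one (hprob t) s
    calc (∑ s : S, ∑ a : A, ∑ s' : S,
          visitS γ P π ρ₀ s * π s a * P s a s' * (r s a s' + γ * f s' - f s))
        = ∑ s : S, ∑ a : A, ∑ s' : S, ∑' t : ℕ,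
            ((1 - γ) * π s a * P s a s' * (r s a s' + γ * f s' - f s)) * (γ ^ t * D t s) := by
          exact Finset.sum_congr rfl fun s _ => Finset.sum_congr rfl fun a _ =>
            Finset.sum_congr rfl fun s' _ => hsummand s a s'
      _ = ∑' t : ℕ, ∑ s : S, ∑ a : A, ∑ s' : S,
            ((1 - γ) * π s a * P s a s' * (r s a s' + γ * f s' - f s)) * (γ ^ t * D t s) := by
          have sum3 : ∀ (s : S) (a : A), Summable (fun t : ℕ => ∑ s' : S,
              ((1 - γ) * π s a * P s a s' * (r s a s' + γ * f s' - f s)) * (γ ^ t * D t s)) :=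
            fun s a => summable_sum (fun s' _ => hsum1 s a s')
          have sum2 : ∀ (s : S), Summable (fun t : ℕ => ∑ a : A, ∑ s' : S,
              ((1 - γ) * π s a * P s a s' * (r s a s' + γ * f s' - f s)) * (γ ^ t * D t s)) :=
            fun s => summable_sum (fun a _ => sum3 s a)
          calc ∑ s : S, ∑ a : A, ∑ s' : S, ∑' t : ℕ,
                ((1 - γ) * π s a * P s a s' * (r s a s' + γ * f s' - f s)) * (γ ^ t * D t s)
              = ∑ s : S, ∑ a : A, ∑' t : ℕ, ∑ s' : S,
                  ((1 - γ) * π s a * P s a s' * (r s a s' + γ * f s' - f s)) * (γ ^ t * D t s) :=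
                Finset.sum_congr rfl fun s _ => Finset.sum_congr rfl fun a _ =>
                  (Summable.tsum_finsetSum (fun s' _ => hsum1 s a s')).symm
            _ = ∑ s : S, ∑' t : ℕ, ∑ a : A, ∑ s' : S,
                  ((1 - γ) * π s a * P s a s' * (r s a s' + γ * f s' - f s)) * (γ ^ t * D t s) :=
                Finset.sum_congr rfl fun s _ => (Summable.tsum_finsetSum (fun a _ => sum3 s a)).symm
            _ = ∑' t : ℕ, ∑ s : S, ∑ a : A, ∑ s' : S,
                  ((1 - γ) * π s a * P s a s' * (r s a s' + γ * f s' - f s)) * (γ ^ t * D t s) :=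
                (Summable.tsum_finsetSum (fun s _ => sum2 s)).symm
      _ = (1 - γ) * ∑' t : ℕ, γ ^ t *
            (∑ s : S, ∑ a : A, ∑ s' : S,
              D t s * π s a * P s a s' * (r s a s' + γ * f s' - f s)) := by
          rw [← tsum_mul_left]
          refine tsum_congr fun t => ?_
          rw [Finset.mul_sum, Finset.mul_sum]
          refine Finset.sum_congr rfl fun s _ => ?_
          rw [Finset.mul_sum, Finset.mul_sum]
          refine Finset.sum_congr rfl fun a _ => ?_
          rw [Finset.mul_sum, Finset.mul_sum]
          exact Finset.sum_congr rfl fun s' _ => by ring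
  -- inner sum identity
  have hinner : ∀ t, (∑ s : S, ∑ a : A, ∑ s' : S,
        D t s * π s a * P s a s' * (r s a s' + γ * f s' - f s))
      = R t + γ * e (t + 1) - e t := by
    intro t
    have expand : ∀ (s : S) (a : A) (s' : S),
        D t s * π s a * P s a s' * (r s a s' + γ * f s' - f s)
        = D t s * π s a * P s a s' * r s a s'
          + D t s * π s a * P s a s' * (γ * f s')
          - D t s * π s a * P s a s' * f s := fun s a s' => by ring
    simp only [expand, Finset.sum_add_distrib, Finset.sum_sub_distrib]
    rw [hstep t, hself t]
  -- Step 4 : telescope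
  have h4 : (∑' t : ℕ, γ ^ t * (R t + γ * e (t + 1) - e t))
      = (∑' t : ℕ, γ ^ t * R t) - e 0 := by
    have hv : Summable (fun t : ℕ => γ ^ (t + 1) * e (t + 1)) :=
      (summable_nat_add_iff 1).2 hsumE
    have key : ∀ t : ℕ, γ ^ t * (R t + γ * e (t + 1) - e t)
        = γ ^ t * R t + (γ ^ (t + 1) * e (t + 1) - γ ^ t * e t) := fun t => by ring
    rw [tsum_congr key, Summable.tsum_add hsumR (hv.sub hsumE), Summable.tsum_sub hv hsumE,
        Summable.tsum_eq_zero_add hsumE]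
    simp only [pow_zero, one_mul]
    ring
  have he0 : e 0 = ∑ s : S, ρ₀ s * f s := rfl
  rw [h1, h3]
  have h5 : (∑' t : ℕ, γ ^ t * ∑ s : S, ∑ a : A, ∑ s' : S,
      D t s * π s a * P s a s' * (r s a s' + γ * f s' - f s))
      = ∑' t : ℕ, γ ^ t * (R t + γ * e (t + 1) - e t) :=
    tsum_congr fun t => by rw [hinner t]
  rw [h5, h4, he0]
  field_simp
  ring
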